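/- arXiv:1105.4014 — 4 statements merged into one kernel-verified Lean document; each statement's English description precedes it below -/
import Mathlib

section
/- Let m, ħ, κ > 0 and let U : ℝ → ℝ be differentiable. Let H : ℝ⁴ → ℝ, written H(x, p, θₓ, θ_p), be continuously differentiable and satisfy, for all (x, p, θₓ, θ_p) ∈ ℝ⁴, the two equations κ·m·∂H/∂p + (m/ħ)·∂H/∂θₓ = p and κ·∂H/∂x − (1/ħ)·∂H/∂θ_p = U′(x). Then there exists a function F : ℝ² → ℝ such that H(x, p, θₓ, θ_p) = (1/κ)·[p²/(2m) + U(x)] + F(p − ħκθₓ, x + ħκθ_p) for all (x, p, θₓ, θ_p). -/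
/-- Let `m, ħ, κ > 0` and `U : ℝ → ℝ` differentiable. Let `H (x, p, θₓ, θ_p)` be
continuously differentiable and satisfy
`κ·m·∂H/∂p + (m/ħ)·∂H/∂θₓ = p` and `κ·∂H/∂x − (1/ħ)·∂H/∂θ_p = U′(x)` everywhere.
Then there is `F : ℝ² → ℝ` with
`H (x, p, θₓ, θ_p) = (1/κ)·[p²/(2m) + U(x)] + F (p − ħκθₓ, x + ħκθ_p)`. -/
theorem unified_hamiltonian_form (m hbar κ : ℝ) (hm : 0 < m) (hh : 0 < hbar)
    (hκ : 0 < κ) (U : ℝ → ℝ) (hU : Differentiable ℝ U)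
    (H : ℝ × ℝ × ℝ × ℝ → ℝ) (hH : ContDiff ℝ 1 H)
    (heq1 : ∀ x p tx tp : ℝ,
      κ * m * deriv (fun q => H (x, q, tx, tp)) p
        + (m / hbar) * deriv (fun t => H (x, p, t, tp)) tx = p)
    (heq2 : ∀ x p tx tp : ℝ,
      κ * deriv (fun y => H (y, p, tx, tp)) x
        - (1 / hbar) * deriv (fun t => H (x, p, tx, t)) tp = deriv U x) :
    ∃ F : ℝ → ℝ → ℝ, ∀ x p tx tp : ℝ,
      H (x, p, tx, tp) = (1 / κ) * (p ^ 2 / (2 * m) + U x)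
        + F (p - hbar * κ * tx) (x + hbar * κ * tp) := by
  have hd : Differentiable ℝ H := hH.differentiable one_ne_zero
  set c : ℝ := hbar * κ with hc
  -- partial derivatives as fderiv applied to basis directions
  have hpx : ∀ x p tx tp : ℝ, deriv (fun y => H (y, p, tx, tp)) x
      = fderiv ℝ H (x, p, tx, tp) (1, 0, 0, 0) := by
    intro x p tx tp
    have hγ : HasDerivAt (fun y : ℝ => ((y, p, tx, tp) : ℝ × ℝ × ℝ × ℝ)) (1, 0, 0, 0) x :=
      HasDerivAt.prodMk (hasDerivAt_id x) (HasDerivAt.prodMk (hasDerivAt_const x p)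
        (HasDerivAt.prodMk (hasDerivAt_const x tx) (hasDerivAt_const x tp)))
    exact ((hd _).hasFDerivAt.comp_hasDerivAt x hγ).deriv
  have hpp : ∀ x p tx tp : ℝ, deriv (fun q => H (x, q, tx, tp)) p
      = fderiv ℝ H (x, p, tx, tp) (0, 1, 0, 0) := by
    intro x p tx tp
    have hγ : HasDerivAt (fun q : ℝ => ((x, q, tx, tp) : ℝ × ℝ × ℝ × ℝ)) (0, 1, 0, 0) p :=
      HasDerivAt.prodMk (hasDerivAt_const p x) (HasDerivAt.prodMk (hasDerivAt_id p)
        (HasDerivAt.prodMk (hasDerivAt_const p tx) (hasDerivAt_const p tp)))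
    exact ((hd _).hasFDerivAt.comp_hasDerivAt p hγ).deriv
  have hptx : ∀ x p tx tp : ℝ, deriv (fun t => H (x, p, t, tp)) tx
      = fderiv ℝ H (x, p, tx, tp) (0, 0, 1, 0) := by
    intro x p tx tp
    have hγ : HasDerivAt (fun t : ℝ => ((x, p, t, tp) : ℝ × ℝ × ℝ × ℝ)) (0, 0, 1, 0) tx :=
      HasDerivAt.prodMk (hasDerivAt_const tx x) (HasDerivAt.prodMk (hasDerivAt_const tx p)
        (HasDerivAt.prodMk (hasDerivAt_id tx) (hasDerivAt_const tx tp)))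
    exact ((hd _).hasFDerivAt.comp_hasDerivAt tx hγ).deriv
  have hptp : ∀ x p tx tp : ℝ, deriv (fun t => H (x, p, tx, t)) tp
      = fderiv ℝ H (x, p, tx, tp) (0, 0, 0, 1) := by
    intro x p tx tp
    have hγ : HasDerivAt (fun t : ℝ => ((x, p, tx, t) : ℝ × ℝ × ℝ × ℝ)) (0, 0, 0, 1) tp :=
      HasDerivAt.prodMk (hasDerivAt_const tp x) (HasDerivAt.prodMk (hasDerivAt_const tp p)
        (HasDerivAt.prodMk (hasDerivAt_const tp tx) (hasDerivAt_id tp)))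
    exact ((hd _).hasFDerivAt.comp_hasDerivAt tp hγ).deriv
  -- characteristic line 1: move (p, tx) along (c, 1)
  have key1 : ∀ x p tx tp : ℝ, H (x, p - c * tx, 0, tp)
      = H (x, p, tx, tp) - (1/κ) * (p ^ 2 / (2*m)) + (1/κ) * ((p - c*tx) ^ 2 / (2*m)) := by
    intro x p tx tp
    set f : ℝ → ℝ := fun s => H (x, p + c*s, tx + s, tp) - (1/κ) * ((p + c*s) ^ 2 / (2*m))
      with hf_def
    have hf : ∀ s : ℝ, HasDerivAt f 0 s := by
      intro s
      have hlin : HasDerivAt (fun s : ℝ => p + c * s) c s := by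
        simpa using ((hasDerivAt_id s).const_mul c).const_add p
      have hlin2 : HasDerivAt (fun s : ℝ => tx + s) 1 s := by
        simpa using (hasDerivAt_id s).const_add tx
      have hγ : HasDerivAt (fun s : ℝ => ((x, p + c*s, tx + s, tp) : ℝ × ℝ × ℝ × ℝ))
          (0, c, 1, 0) s :=
        HasDerivAt.prodMk (hasDerivAt_const s x) (HasDerivAt.prodMk hlin (HasDerivAt.prodMk hlin2 (hasDerivAt_const s tp)))
      have hH1 : HasDerivAt (fun s : ℝ => H (x, p + c*s, tx + s, tp))
          (fderiv ℝ H (x, p + c*s, tx + s, tp) (0, c, 1, 0)) s :=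
        (hd _).hasFDerivAt.comp_hasDerivAt s hγ
      have hpoly : HasDerivAt (fun s : ℝ => (1/κ) * ((p + c*s) ^ 2 / (2*m)))
          ((1/κ) * ((2 * (p + c*s) ^ 1 * c) / (2*m))) s :=
        ((hlin.pow 2).div_const (2*m)).const_mul (1/κ)
      have hcomb := hH1.sub hpoly
      have hdir : ((0, c, 1, 0) : ℝ × ℝ × ℝ × ℝ)
          = c • ((0, 1, 0, 0) : ℝ × ℝ × ℝ × ℝ) + ((0, 0, 1, 0) : ℝ × ℝ × ℝ × ℝ) := by
        simp [Prod.ext_iff]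
      have he := heq1 x (p + c*s) (tx + s) tp
      rw [hpp, hptx] at he
      have hval : fderiv ℝ H (x, p + c*s, tx + s, tp) (0, c, 1, 0)
          - (1/κ) * ((2 * (p + c*s) ^ 1 * c) / (2*m)) = 0 := by
        rw [hdir, map_add, map_smul, smul_eq_mul]
        have hm' : (m : ℝ) ≠ 0 := ne_of_gt hm
        have hh' : (hbar : ℝ) ≠ 0 := ne_of_gt hh
        have hκ' : (κ : ℝ) ≠ 0 := ne_of_gt hκ
        field_simp [hc] at he ⊢
        nlinarith [he]
      rw [hval] at hcomb
      exact hcomb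
    have hdf : Differentiable ℝ f := fun s => (hf s).differentiableAt
    have hconst := is_const_of_deriv_eq_zero hdf (fun s => (hf s).deriv) (-tx) 0
    simp only [hf_def] at hconst
    have h1 : p + c * (-tx) = p - c * tx := by ring
    have h2 : tx + (-tx) = (0:ℝ) := by ring
    rw [h1, h2] at hconst
    simp only [one_div, mul_zero, add_zero, sub_zero] at hconst ⊢
    linarith [hconst]
  -- characteristic line 2: move (x, tp) along (c, -1)
  have key2 : ∀ x p tx tp : ℝ, H (x + c * tp, p, tx, 0)
      = H (x, p, tx, tp) - (1/κ) * U x + (1/κ) * U (x + c*tp) := by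
    intro x p tx tp
    set g : ℝ → ℝ := fun s => H (x + c*s, p, tx, tp - s) - (1/κ) * U (x + c*s) with hg_def
    have hg : ∀ s : ℝ, HasDerivAt g 0 s := by
      intro s
      have hlin : HasDerivAt (fun s : ℝ => x + c * s) c s := by
        simpa using ((hasDerivAt_id s).const_mul c).const_add x
      have hlin2 : HasDerivAt (fun s : ℝ => tp - s) (-1) s := by
        exact HasDerivAt.const_sub tp (hasDerivAt_id' s)
      have hγ : HasDerivAt (fun s : ℝ => ((x + c*s, p, tx, tp - s) : ℝ × ℝ × ℝ × ℝ))
          (c, 0, 0, -1) s :=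
        HasDerivAt.prodMk hlin (HasDerivAt.prodMk (hasDerivAt_const s p) (HasDerivAt.prodMk (hasDerivAt_const s tx) hlin2))
      have hH1 : HasDerivAt (fun s : ℝ => H (x + c*s, p, tx, tp - s))
          (fderiv ℝ H (x + c*s, p, tx, tp - s) (c, 0, 0, -1)) s :=
        (hd _).hasFDerivAt.comp_hasDerivAt s hγ
      have hUd : HasDerivAt (fun s : ℝ => (1/κ) * U (x + c*s))
          ((1/κ) * (deriv U (x + c*s) * c)) s :=
        (((hU _).hasDerivAt.comp s hlin)).const_mul (1/κ)
      have hcomb := hH1.sub hUd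
      have hdir : ((c, 0, 0, -1) : ℝ × ℝ × ℝ × ℝ)
          = c • ((1, 0, 0, 0) : ℝ × ℝ × ℝ × ℝ) + (-1 : ℝ) • ((0, 0, 0, 1) : ℝ × ℝ × ℝ × ℝ) := by
        simp [Prod.ext_iff]
      have he := heq2 (x + c*s) p tx (tp - s)
      rw [hpx, hptp] at he
      have hval : fderiv ℝ H (x + c*s, p, tx, tp - s) (c, 0, 0, -1)
          - (1/κ) * (deriv U (x + c*s) * c) = 0 := by
        rw [hdir, map_add, map_smul, map_smul, smul_eq_mul, smul_eq_mul]
        have hh' : (hbar : ℝ) ≠ 0 := ne_of_gt hh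
        have hκ' : (κ : ℝ) ≠ 0 := ne_of_gt hκ
        field_simp [hc] at he ⊢
        nlinarith [he]
      rw [hval] at hcomb
      exact hcomb
    have hdg : Differentiable ℝ g := fun s => (hg s).differentiableAt
    have hconst := is_const_of_deriv_eq_zero hdg (fun s => (hg s).deriv) tp 0
    simp only [hg_def] at hconst
    have h2 : tp - tp = (0:ℝ) := by ring
    rw [h2] at hconst
    simp only [one_div, mul_zero, add_zero, sub_zero] at hconst ⊢
    linarith [hconst]
  refine ⟨fun u v => H (v, u, 0, 0) - (1/κ) * (u ^ 2 / (2*m) + U v), fun x p tx tp => ?_⟩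
  have k2 := key2 x p tx tp
  have k1 := key1 (x + c*tp) p tx 0
  simp only [hc] at k1 k2 ⊢
  have : H (x + hbar * κ * tp, p - hbar * κ * tx, 0, 0)
      = H (x, p, tx, tp) - (1/κ) * U x + (1/κ) * U (x + hbar * κ * tp)
        - (1/κ) * (p ^ 2 / (2*m)) + (1/κ) * ((p - hbar * κ * tx) ^ 2 / (2*m)) := by
    rw [k1, k2]
  rw [this]
  ring
end

section
/- Let m > 0, let U : ℝ → ℝ be differentiable, let f : ℝ² → ℝ be real-valued, and let ψ : ℝ³ → ℂ, written ψ(t, x, p), be differentiable and satisfy i·∂ψ/∂t + i·(p/m)·∂ψ/∂x − i·U′(x)·∂ψ/∂p − f(x, p)·ψ = 0 everywhere. Then the function ρ(t, x, p) = |ψ(t, x, p)|² satisfies the classical Liouville equation ∂ρ/∂t = −(p/m)·∂ρ/∂x + U′(x)·∂ρ/∂p everywhere. -/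
open Complex

lemma hasDerivAt_normSq_comp {g : ℝ → ℂ} {g' : ℂ} {t : ℝ}
    (h : HasDerivAt g g' t) :
    HasDerivAt (fun s => Complex.normSq (g s))
      ((g' * (starRingEnd ℂ) (g t) + g t * (starRingEnd ℂ) g').re) t := by
  have hc : HasDerivAt (fun s => (starRingEnd ℂ) (g s)) ((starRingEnd ℂ) g') t := by
    simpa using h.star
  have hmul := h.mul hc
  have hre := Complex.reCLM.hasFDerivAt.comp_hasDerivAt t hmul
  simpa [Function.comp_def, Complex.mul_conj] using hre

/-- Let `m > 0`, `U : ℝ → ℝ` differentiable, `f : ℝ² → ℝ`, and let `ψ (t, x, p)` be a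
differentiable complex-valued function satisfying
`i·∂ψ/∂t + i·(p/m)·∂ψ/∂x − i·U′(x)·∂ψ/∂p − f(x,p)·ψ = 0` everywhere.
Then `ρ(t, x, p) = |ψ(t, x, p)|²` satisfies the classical Liouville equation
`∂ρ/∂t = −(p/m)·∂ρ/∂x + U′(x)·∂ρ/∂p` everywhere. -/
theorem koopman_von_neumann_liouville (m : ℝ) (hm : 0 < m) (U : ℝ → ℝ)
    (hU : Differentiable ℝ U) (f : ℝ → ℝ → ℝ)
    (ψ : ℝ × ℝ × ℝ → ℂ) (hψ : Differentiable ℝ ψ)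
    (heq : ∀ t x p : ℝ,
      Complex.I * deriv (fun s => ψ (s, x, p)) t
        + Complex.I * ((p / m : ℝ) : ℂ) * deriv (fun y => ψ (t, y, p)) x
        - Complex.I * ((deriv U x : ℝ) : ℂ) * deriv (fun q => ψ (t, x, q)) p
        - ((f x p : ℝ) : ℂ) * ψ (t, x, p) = 0) :
    ∀ t x p : ℝ,
      deriv (fun s => Complex.normSq (ψ (s, x, p))) t
        = -(p / m) * deriv (fun y => Complex.normSq (ψ (t, y, p))) x
          + deriv U x * deriv (fun q => Complex.normSq (ψ (t, x, q))) p := by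
  intro t x p
  -- differentiability of the partial maps
  have hdt : DifferentiableAt ℝ (fun s => ψ (s, x, p)) t :=
    (hψ (t, x, p)).comp t (DifferentiableAt.prodMk differentiableAt_id (differentiableAt_const _))
  have hdx : DifferentiableAt ℝ (fun y => ψ (t, y, p)) x :=
    (hψ (t, x, p)).comp x (DifferentiableAt.prodMk (differentiableAt_const _)
      (DifferentiableAt.prodMk differentiableAt_id (differentiableAt_const _)))
  have hdp : DifferentiableAt ℝ (fun q => ψ (t, x, q)) p :=
    (hψ (t, x, p)).comp p (DifferentiableAt.prodMk (differentiableAt_const _)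
      (DifferentiableAt.prodMk (differentiableAt_const _) differentiableAt_id))
  set Dt := deriv (fun s => ψ (s, x, p)) t with hDt
  set Dx := deriv (fun y => ψ (t, y, p)) x with hDx
  set Dp := deriv (fun q => ψ (t, x, q)) p with hDp
  set Ψ := ψ (t, x, p) with hΨ
  have h1 : HasDerivAt (fun s => ψ (s, x, p)) Dt t := hdt.hasDerivAt
  have h2 : HasDerivAt (fun y => ψ (t, y, p)) Dx x := hdx.hasDerivAt
  have h3 : HasDerivAt (fun q => ψ (t, x, q)) Dp p := hdp.hasDerivAt
  have n1 := (hasDerivAt_normSq_comp h1).deriv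
  have n2 := (hasDerivAt_normSq_comp h2).deriv
  have n3 := (hasDerivAt_normSq_comp h3).deriv
  rw [n1, n2, n3]
  -- solve the PDE for Dt
  have key : Dt = -((p / m : ℝ) : ℂ) * Dx + ((deriv U x : ℝ) : ℂ) * Dp
      - Complex.I * ((f x p : ℝ) : ℂ) * Ψ := by
    have h := heq t x p
    linear_combination (-Complex.I) * h
      + (Dt + ((p / m : ℝ) : ℂ) * Dx - ((deriv U x : ℝ) : ℂ) * Dp) * Complex.I_sq
  rw [key]
  simp only [Complex.add_re, Complex.sub_re, Complex.mul_re, Complex.mul_im,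
    Complex.add_im, Complex.sub_im, Complex.neg_re, Complex.neg_im,
    Complex.I_re, Complex.I_im, Complex.ofReal_re, Complex.ofReal_im,
    Complex.conj_re, Complex.conj_im]
  ring
end

section
/- Let m, ħ, κ > 0, let U : ℝ → ℝ, and let Ψ : ℝ³ → ℂ, written Ψ(t, x, λ_p), be twice continuously differentiable and satisfy iħ·∂Ψ/∂t = (ħ/m)·∂²Ψ/∂λ_p∂x + (1/κ)·[U(x − ħκλ_p/2) − U(x + ħκλ_p/2)]·Ψ everywhere. Define ρ : ℝ³ → ℂ by ρ(t, u, v) = Ψ(t, (u+v)/2, (v−u)/(ħκ)). Then ρ satisfies iħκ·∂ρ/∂t = ((ħκ)²/(2m))·(∂²ρ/∂v² − ∂²ρ/∂u²) + [U(u) − U(v)]·ρ everywhere. -/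
open Complex

/-- Let `m, ħ, κ > 0`, `U : ℝ → ℝ`, and let `Ψ (t, x, λ_p)` be a twice continuously
differentiable complex-valued function satisfying
`iħ·∂Ψ/∂t = (ħ/m)·∂²Ψ/∂λ_p∂x + (1/κ)·[U(x − ħκλ_p/2) − U(x + ħκλ_p/2)]·Ψ` everywhere.
Define `ρ(t, u, v) = Ψ(t, (u+v)/2, (v−u)/(ħκ))`. Then `ρ` satisfies
`iħκ·∂ρ/∂t = ((ħκ)²/(2m))·(∂²ρ/∂v² − ∂²ρ/∂u²) + [U(u) − U(v)]·ρ` everywhere. -/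
theorem unified_to_von_neumann (m hbar κ : ℝ) (hm : 0 < m) (hh : 0 < hbar) (hκ : 0 < κ)
    (U : ℝ → ℝ) (Ψ : ℝ × ℝ × ℝ → ℂ) (hΨ : ContDiff ℝ 2 Ψ)
    (heq : ∀ t x lp : ℝ,
      Complex.I * (hbar : ℂ) * deriv (fun s => Ψ (s, x, lp)) t
        = ((hbar / m : ℝ) : ℂ) * deriv (fun y => deriv (fun l => Ψ (t, y, l)) lp) x
          + ((1 / κ : ℝ) : ℂ)
            * ((U (x - hbar * κ * lp / 2) - U (x + hbar * κ * lp / 2) : ℝ) : ℂ)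
            * Ψ (t, x, lp)) :
    ∀ t u v : ℝ,
      Complex.I * ((hbar * κ : ℝ) : ℂ)
          * deriv (fun s => Ψ (s, (u + v) / 2, (v - u) / (hbar * κ))) t
        = (((hbar * κ) ^ 2 / (2 * m) : ℝ) : ℂ)
            * (deriv (deriv (fun v' => Ψ (t, (u + v') / 2, (v' - u) / (hbar * κ)))) v
              - deriv (deriv (fun u' => Ψ (t, (u' + v) / 2, (v - u') / (hbar * κ)))) u)
          + ((U u - U v : ℝ) : ℂ) * Ψ (t, (u + v) / 2, (v - u) / (hbar * κ)) := by
  intro t u v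
  have hmne : m ≠ 0 := hm.ne'
  have hhne : hbar ≠ 0 := hh.ne'
  have hκne : κ ≠ 0 := hκ.ne'
  set c : ℝ := hbar * κ with hc
  have hcne : c ≠ 0 := mul_ne_zero hhne hκne
  have hΨd : Differentiable ℝ Ψ := hΨ.differentiable two_ne_zero
  have hFd : Differentiable ℝ (fderiv ℝ Ψ) :=
    (hΨ.fderiv_right (m := 1) le_rfl).differentiable one_ne_zero
  -- first derivative along an affine line
  have dline : ∀ (p0 w : ℝ × ℝ × ℝ) (s0 : ℝ),
      HasDerivAt (fun s : ℝ => Ψ (p0 + s • w)) (fderiv ℝ Ψ (p0 + s0 • w) w) s0 := by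
    intro p0 w s0
    have h1 : HasDerivAt (fun s : ℝ => p0 + s • w) w s0 := by
      simpa using ((hasDerivAt_id s0).smul_const w).const_add p0
    exact ((hΨd _).hasFDerivAt).comp_hasDerivAt s0 h1
  -- second derivative along an affine line
  have dline2 : ∀ (p0 w w' : ℝ × ℝ × ℝ) (s0 : ℝ),
      HasDerivAt (fun s : ℝ => fderiv ℝ Ψ (p0 + s • w) w')
        (fderiv ℝ (fderiv ℝ Ψ) (p0 + s0 • w) w w') s0 := by
    intro p0 w w' s0
    have h1 : HasDerivAt (fun s : ℝ => p0 + s • w) w s0 := by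
      simpa using ((hasDerivAt_id s0).smul_const w).const_add p0
    have h2 := ((hFd _).hasFDerivAt).comp_hasDerivAt s0 h1
    simpa using h2.clm_apply (hasDerivAt_const s0 w')
  set p : ℝ × ℝ × ℝ := (t, (u + v) / 2, (v - u) / c) with hp
  set B := fderiv ℝ (fderiv ℝ Ψ) p with hB
  have hsym : ∀ a b : ℝ × ℝ × ℝ, B a b = B b a :=
    second_derivative_symmetric (fun y => (hΨd y).hasFDerivAt) ((hFd p).hasFDerivAt)
  -- time derivative
  have e0 : deriv (fun s => Ψ (s, (u + v) / 2, (v - u) / c)) t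
      = fderiv ℝ Ψ p ((1 : ℝ), (0 : ℝ), (0 : ℝ)) := by
    have h := (dline (0, (u + v) / 2, (v - u) / c) (1, 0, 0) t).deriv
    have harg : ((0, (u + v) / 2, (v - u) / c) : ℝ × ℝ × ℝ)
        + t • ((1 : ℝ), (0 : ℝ), (0 : ℝ)) = p := by
      simp [hp, Prod.ext_iff]
    rw [harg] at h
    rw [← h]
    congr 1
    funext s
    congr 1
    simp [Prod.ext_iff]
  -- generic second derivative along a line, stated at the point p
  have sec : ∀ (p0 w : ℝ × ℝ × ℝ) (f : ℝ → ℂ) (s0 : ℝ),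
      (∀ s, f s = Ψ (p0 + s • w)) → p0 + s0 • w = p →
      deriv (deriv f) s0 = B w w := by
    intro p0 w f s0 hf hpt
    have hfe : f = fun s => Ψ (p0 + s • w) := funext hf
    have h1 : deriv f = fun s => fderiv ℝ Ψ (p0 + s • w) w := by
      funext s
      rw [hfe]
      exact (dline p0 w s).deriv
    rw [h1]
    have := (dline2 p0 w w s0).deriv
    rw [hpt] at this
    exact this
  set wv : ℝ × ℝ × ℝ := (0, 1 / 2, 1 / c) with hwv
  set wu : ℝ × ℝ × ℝ := (0, 1 / 2, -(1 / c)) with hwu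
  have e2 : deriv (deriv (fun v' => Ψ (t, (u + v') / 2, (v' - u) / c))) v = B wv wv := by
    apply sec (t, u / 2, -u / c) wv _ v
    · intro s
      congr 1
      simp only [hwv, Prod.mk_add_mk, Prod.smul_mk, smul_eq_mul, Prod.ext_iff]
      refine ⟨by ring, by ring, by ring⟩
    · simp only [hwv, hp, Prod.mk_add_mk, Prod.smul_mk, smul_eq_mul, Prod.ext_iff]
      refine ⟨by ring, by ring, by ring⟩
  have e3 : deriv (deriv (fun u' => Ψ (t, (u' + v) / 2, (v - u') / c))) u = B wu wu := by
    apply sec (t, v / 2, v / c) wu _ u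
    · intro s
      congr 1
      simp only [hwu, Prod.mk_add_mk, Prod.smul_mk, smul_eq_mul, Prod.ext_iff]
      refine ⟨by ring, by ring, by ring⟩
    · simp only [hwu, hp, Prod.mk_add_mk, Prod.smul_mk, smul_eq_mul, Prod.ext_iff]
      refine ⟨by ring, by ring, by ring⟩
  -- mixed second derivative from the hypothesis
  have e4 : deriv (fun y => deriv (fun l => Ψ (t, y, l)) ((v - u) / c)) ((u + v) / 2)
      = B ((0 : ℝ), (1 : ℝ), (0 : ℝ)) ((0 : ℝ), (0 : ℝ), (1 : ℝ)) := by
    have h1 : (fun y => deriv (fun l => Ψ (t, y, l)) ((v - u) / c))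
        = fun y => fderiv ℝ Ψ ((t, 0, (v - u) / c) + y • ((0 : ℝ), (1 : ℝ), (0 : ℝ)))
            ((0 : ℝ), (0 : ℝ), (1 : ℝ)) := by
      funext y
      have h2 : (fun l => Ψ (t, y, l))
          = fun l => Ψ ((t, y, 0) + l • ((0 : ℝ), (0 : ℝ), (1 : ℝ))) := by
        funext l; congr 1; simp [Prod.ext_iff]
      rw [h2, (dline (t, y, 0) (0, 0, 1) ((v - u) / c)).deriv]
      congr 2
      simp [Prod.ext_iff]
    rw [h1]
    have h3 := (dline2 (t, 0, (v - u) / c) ((0 : ℝ), (1 : ℝ), (0 : ℝ))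
        ((0 : ℝ), (0 : ℝ), (1 : ℝ)) ((u + v) / 2)).deriv
    have harg : ((t, 0, (v - u) / c) : ℝ × ℝ × ℝ)
        + ((u + v) / 2) • ((0 : ℝ), (1 : ℝ), (0 : ℝ)) = p := by
      simp [hp, Prod.ext_iff]
    rw [harg] at h3
    exact h3
  -- the hypothesis at the relevant point
  have hU1 : (u + v) / 2 - hbar * κ * ((v - u) / c) / 2 = u := by
    rw [hc]; field_simp; ring
  have hU2 : (u + v) / 2 + hbar * κ * ((v - u) / c) / 2 = v := by
    rw [hc]; field_simp; ring
  have key := heq t ((u + v) / 2) ((v - u) / c)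
  rw [hU1, hU2, e0, e4] at key
  -- expand the bilinear terms
  have hwv' : wv = (1 / 2 : ℝ) • ((0 : ℝ), (1 : ℝ), (0 : ℝ))
      + (1 / c : ℝ) • ((0 : ℝ), (0 : ℝ), (1 : ℝ)) := by
    simp [hwv, Prod.ext_iff]
  have hwu' : wu = (1 / 2 : ℝ) • ((0 : ℝ), (1 : ℝ), (0 : ℝ))
      - (1 / c : ℝ) • ((0 : ℝ), (0 : ℝ), (1 : ℝ)) := by
    simp [hwu, Prod.ext_iff]
  have hdiff : B wv wv - B wu wu
      = ((2 / c : ℝ) : ℂ) * B ((0 : ℝ), (1 : ℝ), (0 : ℝ)) ((0 : ℝ), (0 : ℝ), (1 : ℝ)) := by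
    rw [hwv', hwu']
    simp only [map_add, map_sub, map_smul, ContinuousLinearMap.add_apply,
      ContinuousLinearMap.sub_apply, ContinuousLinearMap.smul_apply,
      ContinuousLinearMap.coe_smul', Pi.smul_apply, real_smul]
    rw [hsym ((0 : ℝ), (0 : ℝ), (1 : ℝ)) ((0 : ℝ), (1 : ℝ), (0 : ℝ))]
    push_cast
    ring
  rw [e0, e2, e3, hdiff]
  -- finish with algebra
  set A := fderiv ℝ Ψ p ((1 : ℝ), (0 : ℝ), (0 : ℝ)) with hA
  set M := B ((0 : ℝ), (1 : ℝ), (0 : ℝ)) ((0 : ℝ), (0 : ℝ), (1 : ℝ)) with hM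
  set Z := Ψ p with hZ
  simp only [hc]
  push_cast at key ⊢
  have hκC : (κ : ℂ) ≠ 0 := by exact_mod_cast hκne
  have hhC : (hbar : ℂ) ≠ 0 := by exact_mod_cast hhne
  have hmC : (m : ℂ) ≠ 0 := by exact_mod_cast hmne
  field_simp at key ⊢
  linear_combination key
end

section
/- Let U : ℝ → ℝ be differentiable. Then U satisfies the functional equation U(x − α) − U(x + α) = −2α·U′(x) for all x, α ∈ ℝ if and only if there exist constants a, b, c ∈ ℝ such that U(x) = a·x² + b·x + c for all x ∈ ℝ. -/
/-- Let `U : ℝ → ℝ` be differentiable. Then `U` satisfies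
`U(x − α) − U(x + α) = −2α·U′(x)` for all `x, α ∈ ℝ` if and only if
`U` is a quadratic polynomial `U(x) = a·x² + b·x + c`. -/
theorem quadratic_potential_iff (U : ℝ → ℝ) (hU : Differentiable ℝ U) :
    (∀ x α : ℝ, U (x - α) - U (x + α) = -2 * α * deriv U x)
      ↔ ∃ a b c : ℝ, ∀ x : ℝ, U x = a * x ^ 2 + b * x + c := by
  constructor
  · intro h
    set f := deriv U with hf
    -- Step 1: f(x-α) + f(x+α) = 2 f(x) by differentiating in α
    have key : ∀ x α : ℝ, f (x - α) + f (x + α) = 2 * f x := by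
      intro x α
      have h1 : HasDerivAt (fun t : ℝ => U (x - t)) (deriv U (x - α) * (-1)) α :=
        (hU (x - α)).hasDerivAt.comp α ((hasDerivAt_id α).const_sub x)
      have h2 : HasDerivAt (fun t : ℝ => U (x + t)) (deriv U (x + α) * 1) α :=
        (hU (x + α)).hasDerivAt.comp α ((hasDerivAt_id α).const_add x)
      have h3 : HasDerivAt (fun t : ℝ => U (x - t) - U (x + t))
          (deriv U (x - α) * (-1) - deriv U (x + α) * 1) α := h1.sub h2
      have h4 : HasDerivAt (fun t : ℝ => -2 * t * f x) (-2 * f x) α := by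
        simpa using ((hasDerivAt_id α).const_mul (-2)).mul_const (f x)
      have heq : (fun t : ℝ => U (x - t) - U (x + t)) = fun t : ℝ => -2 * t * f x :=
        funext fun t => h x t
      rw [heq] at h3
      have := h3.unique h4
      simp only [hf] at this ⊢
      linarith
    -- Step 2: f is differentiable
    have hfeq : f = fun x => (U (x + 1) - U (x - 1)) / 2 := by
      funext x
      have := h x 1
      simp only [hf] at this ⊢
      linarith
    have hfd : Differentiable ℝ f := by
      rw [hfeq]
      exact ((hU.comp (differentiable_id.add_const 1)).sub
        (hU.comp (differentiable_id.sub_const 1))).div_const 2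
    -- Step 3: deriv f is constant
    have key2 : ∀ t : ℝ, deriv f t = deriv f 0 := by
      intro t
      have h1 : HasDerivAt (fun s : ℝ => f (t/2 - s)) (deriv f (t/2 - t/2) * (-1)) (t/2) :=
        (hfd (t/2 - t/2)).hasDerivAt.comp (t/2) ((hasDerivAt_id (t/2)).const_sub (t/2))
      have h2 : HasDerivAt (fun s : ℝ => f (t/2 + s)) (deriv f (t/2 + t/2) * 1) (t/2) :=
        (hfd (t/2 + t/2)).hasDerivAt.comp (t/2) ((hasDerivAt_id (t/2)).const_add (t/2))
      have h3 : HasDerivAt (fun s : ℝ => f (t/2 - s) + f (t/2 + s))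
          (deriv f (t/2 - t/2) * (-1) + deriv f (t/2 + t/2) * 1) (t/2) := h1.add h2
      have heq : (fun s : ℝ => f (t/2 - s) + f (t/2 + s)) = fun _ : ℝ => 2 * f (t/2) :=
        funext fun s => key (t/2) s
      rw [heq] at h3
      have h4 : HasDerivAt (fun _ : ℝ => 2 * f (t/2)) 0 (t/2) := hasDerivAt_const _ _
      have h5 := h3.unique h4
      have e1 : t/2 - t/2 = 0 := by ring
      have e2 : t/2 + t/2 = t := by ring
      rw [e1, e2] at h5
      linarith
    set c0 := deriv f 0 with hc0
    -- Step 4: f x = c0 * x + f 0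
    have hflin : ∀ x : ℝ, f x = c0 * x + f 0 := by
      have hg : ∀ x y : ℝ, (fun x => f x - c0 * x) x = (fun x => f x - c0 * x) y := by
        apply is_const_of_deriv_eq_zero
        · exact hfd.sub (differentiable_id.const_mul c0)
        · intro x
          have h1 : HasDerivAt (fun x => f x - c0 * x) (deriv f x - c0 * 1) x :=
            (hfd x).hasDerivAt.sub ((hasDerivAt_id x).const_mul c0)
          rw [h1.deriv, key2 x]
          ring
      intro x
      have := hg x 0
      simp only [mul_zero] at this
      linarith
    -- Step 5: U x = (c0/2) x^2 + f 0 * x + U 0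
    refine ⟨c0 / 2, f 0, U 0, ?_⟩
    have hg : ∀ x y : ℝ, (fun x => U x - (c0 / 2 * x ^ 2 + f 0 * x)) x
        = (fun x => U x - (c0 / 2 * x ^ 2 + f 0 * x)) y := by
      apply is_const_of_deriv_eq_zero
      · exact hU.sub (((differentiable_pow 2).const_mul _).add (differentiable_id.const_mul _))
      · intro x
        have h1 : HasDerivAt (fun x : ℝ => c0 / 2 * x ^ 2 + f 0 * x)
            (c0 / 2 * (2 * x ^ 1) + f 0 * 1) x :=
          ((hasDerivAt_pow 2 x).const_mul (c0 / 2)).add ((hasDerivAt_id x).const_mul (f 0))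
        have h2 : HasDerivAt (fun x => U x - (c0 / 2 * x ^ 2 + f 0 * x))
            (f x - (c0 / 2 * (2 * x ^ 1) + f 0 * 1)) x := (hU x).hasDerivAt.sub h1
        rw [h2.deriv, hflin x]
        ring
    intro x
    have := hg x 0
    simp only [mul_zero, pow_two, zero_mul, mul_zero, sub_zero] at this
    nlinarith [this]
  · rintro ⟨a, b, c, hx⟩
    have hUeq : U = fun x => a * x ^ 2 + b * x + c := funext hx
    subst hUeq
    intro x α
    have h1 : HasDerivAt (fun x : ℝ => a * x ^ 2 + b * x + c)
        (a * (2 * x ^ 1) + b * 1) x :=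
      (((hasDerivAt_pow 2 x).const_mul a).add ((hasDerivAt_id x).const_mul b)).add_const c
    rw [h1.deriv]
    ring
end
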